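/- Let X ∈ B(H) and let (P_n), (Q_n) be sequences of orthogonal projections such that dist(P_n X Q_n, F_{4n−4}) > 1 for all n, where F_k denotes the set of operators of rank at most k. Then there exist orthonormal sequences (x_i) with x_i ∈ P_i H and (y_i) with y_i ∈ Q_i H such that ⟨x_i, X y_j⟩ = 0 for all i ≠ j and ⟨x_i, X y_i⟩ is real and greater than 1 for all i. -/

import Mathlib

noncomputable section
open Cardinal

universe u

variable {H : Type u} [NormedAddCommGroup H] [InnerProductSpace ℂ H] [CompleteSpace H]
  [TopologicalSpace.SeparableSpace H]

/-- The set `F_k` of bounded operators of rank at most `k`. -/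
def finRankLE (H : Type u) [NormedAddCommGroup H] [InnerProductSpace ℂ H] (k : ℕ) :
    Set (H →L[ℂ] H) := {T | LinearMap.rank (T : H →ₗ[ℂ] H) ≤ (k : Cardinal)}

lemma sa_inner {A : H →L[ℂ] H} (hA : IsSelfAdjoint A) (a b : H) :
    (inner ℂ (A a) b : ℂ) = inner ℂ a (A b) := by
  have := ContinuousLinearMap.adjoint_inner_left A b a
  rwa [hA.adjoint_eq] at this

lemma proj_contract {A : H →L[ℂ] H} (hA : IsSelfAdjoint A) (hA2 : A * A = A) (w : H) :
    ‖A w‖ ≤ ‖w‖ := by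
  rcases eq_or_lt_of_le (norm_nonneg (A w)) with h0 | h0
  · rw [← h0]; exact norm_nonneg w
  have h1 : (inner ℂ (A w) (A w) : ℂ) = inner ℂ w (A w) := by
    rw [sa_inner hA]
    congr 1
    have := congrArg (fun f : H →L[ℂ] H => f w) hA2
    simpa [ContinuousLinearMap.mul_apply] using this
  have h2 : (‖A w‖ : ℝ) ^ 2 ≤ ‖w‖ * ‖A w‖ := by
    have := norm_inner_le_norm (𝕜 := ℂ) w (A w)
    calc (‖A w‖ : ℝ) ^ 2 = ‖(inner ℂ (A w) (A w) : ℂ)‖ := by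
          rw [inner_self_eq_norm_sq_to_K]; simp [norm_pow]
      _ = ‖(inner ℂ w (A w) : ℂ)‖ := by rw [h1]
      _ ≤ ‖w‖ * ‖A w‖ := this
  nlinarith

lemma key (X : H →L[ℂ] H) (P Q : ℕ → H →L[ℂ] H)
    (hP : ∀ n, IsSelfAdjoint (P n) ∧ P n * P n = P n)
    (hQ : ∀ n, IsSelfAdjoint (Q n) ∧ Q n * Q n = Q n)
    (hdist : ∀ n : ℕ, 1 < Metric.infDist (P n * X * Q n) (finRankLE H (4 * n)))
    (n : ℕ) (x y : ℕ → H) :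
    ∃ p : H × H, ‖p.1‖ = 1 ∧ ‖p.2‖ = 1 ∧ P n p.1 = p.1 ∧ Q n p.2 = p.2 ∧
      (∀ i < n, (inner ℂ (x i) p.1 : ℂ) = 0) ∧
      (∀ i < n, (inner ℂ (y i) p.2 : ℂ) = 0) ∧
      (∀ i < n, (inner ℂ (x i) (X p.2) : ℂ) = 0) ∧
      (∀ j < n, (inner ℂ p.1 (X (y j)) : ℂ) = 0) ∧
      (inner ℂ p.1 (X p.2) : ℂ).im = 0 ∧ 1 < (inner ℂ p.1 (X p.2) : ℂ).re := by
  classical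
  obtain ⟨hPsa, hPidem⟩ := hP n
  obtain ⟨hQsa, hQidem⟩ := hQ n
  set B : H →L[ℂ] H := P n * X * Q n with hB
  set vE : Fin n ⊕ Fin n → H :=
    Sum.elim (fun i => P n (x i)) (fun i => P n (X (y i))) with hvE
  set vF : Fin n ⊕ Fin n → H :=
    Sum.elim (fun i => Q n (y i)) (fun i => Q n (ContinuousLinearMap.adjoint X (x i))) with hvF
  set E : Submodule ℂ H := Submodule.span ℂ (Set.range vE) with hE
  set F : Submodule ℂ H := Submodule.span ℂ (Set.range vF) with hF
  haveI : FiniteDimensional ℂ E := FiniteDimensional.span_of_finite ℂ (Set.finite_range vE)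
  haveI : FiniteDimensional ℂ F := FiniteDimensional.span_of_finite ℂ (Set.finite_range vF)
  set e : H →L[ℂ] H := E.subtypeL ∘L E.orthogonalProjectionOnto with he
  set f : H →L[ℂ] H := F.subtypeL ∘L F.orthogonalProjectionOnto with hf
  have he_mem : ∀ v, e v ∈ E := fun v => (E.orthogonalProjectionOnto v).2
  have hf_mem : ∀ v, f v ∈ F := fun v => (F.orthogonalProjectionOnto v).2
  have he_fix : ∀ v ∈ E, e v = v := fun v hv => Submodule.starProjection_eq_self_iff (K := E).2 hv
  have hf_fix : ∀ v ∈ F, f v = v := fun v hv => Submodule.starProjection_eq_self_iff (K := F).2 hv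
  have he_orth : ∀ v : H, v - e v ∈ Eᗮ := fun v => Submodule.sub_starProjection_mem_orthogonal (K := E) v
  have hf_orth : ∀ v : H, v - f v ∈ Fᗮ := fun v => Submodule.sub_starProjection_mem_orthogonal (K := F) v
  -- rank bounds
  have hrank_e : LinearMap.rank (e : H →ₗ[ℂ] H) ≤ ((2 * n : ℕ) : Cardinal) := by
    have h1 : LinearMap.range (e : H →ₗ[ℂ] H) ≤ E := by
      rintro v ⟨w, rfl⟩; exact he_mem w
    calc LinearMap.rank (e : H →ₗ[ℂ] H) ≤ Module.rank ℂ E := Submodule.rank_mono h1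
      _ ≤ #(Set.range vE) := rank_span_le _
      _ ≤ ((2 * n : ℕ) : Cardinal) := by
          have h := Cardinal.mk_range_le_lift (f := vE)
          rw [Cardinal.lift_id'] at h
          refine h.trans ?_
          simp [Cardinal.mk_fintype, two_mul]
  have hrank_f : LinearMap.rank (f : H →ₗ[ℂ] H) ≤ ((2 * n : ℕ) : Cardinal) := by
    have h1 : LinearMap.range (f : H →ₗ[ℂ] H) ≤ F := by
      rintro v ⟨w, rfl⟩; exact hf_mem w
    calc LinearMap.rank (f : H →ₗ[ℂ] H) ≤ Module.rank ℂ F := Submodule.rank_mono h1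
      _ ≤ #(Set.range vF) := rank_span_le _
      _ ≤ ((2 * n : ℕ) : Cardinal) := by
          have h := Cardinal.mk_range_le_lift (f := vF)
          rw [Cardinal.lift_id'] at h
          refine h.trans ?_
          simp [Cardinal.mk_fintype, two_mul]
  set T : H →L[ℂ] H := (1 - e) * B * (1 - f) with hT
  have hBT : B - T = e * B + (1 - e) * B * f := by
    rw [hT]; noncomm_ring
  have hR_mem : B - T ∈ finRankLE H (4 * n) := by
    rw [hBT]
    have h1 : LinearMap.rank ((e * B : H →L[ℂ] H) : H →ₗ[ℂ] H)
        ≤ ((2 * n : ℕ) : Cardinal) := by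
      have : ((e * B : H →L[ℂ] H) : H →ₗ[ℂ] H)
          = (e : H →ₗ[ℂ] H).comp (B : H →ₗ[ℂ] H) := rfl
      rw [this]
      exact le_trans (LinearMap.rank_comp_le_left _ _) hrank_e
    have h2 : LinearMap.rank (((1 - e) * B * f : H →L[ℂ] H) : H →ₗ[ℂ] H)
        ≤ ((2 * n : ℕ) : Cardinal) := by
      have : (((1 - e) * B * f : H →L[ℂ] H) : H →ₗ[ℂ] H)
          = (((1 - e) * B : H →L[ℂ] H) : H →ₗ[ℂ] H).comp (f : H →ₗ[ℂ] H) := rfl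
      rw [this]
      exact le_trans (LinearMap.rank_comp_le_right _ _) hrank_f
    have := le_trans (LinearMap.rank_add_le _ _) (add_le_add h1 h2)
    refine le_trans this ?_
    rw [← Nat.cast_add]
    norm_cast
    omega
  -- norm of T is > 1
  have hTnorm : 1 < ‖T‖ := by
    have h1 := Metric.infDist_le_dist_of_mem (x := B) hR_mem
    have h2 : dist B (B - T) = ‖T‖ := by
      rw [dist_eq_norm]; congr 1; abel
    have := hdist n
    rw [← hB] at this
    linarith [h1, h2 ▸ h1, this]
  obtain ⟨u, hu1, hu2⟩ := T.exists_lt_apply_of_lt_opNorm hTnorm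
  set b' : H := Q n (u - f u) with hb'
  set z : H := P n (X b') with hz
  set a' : H := z - e z with ha'
  have hTu : T u = a' := rfl
  have ha'norm : 1 < ‖a'‖ := hTu ▸ hu2
  have ha'ne : a' ≠ 0 := by
    intro h; rw [h] at ha'norm; simp at ha'norm; linarith
  have hPfix : ∀ v, P n (P n v) = P n v := fun v => by
    have := congrArg (fun g : H →L[ℂ] H => g v) hPidem
    simpa [ContinuousLinearMap.mul_apply] using this
  have hQfix : ∀ v, Q n (Q n v) = Q n v := fun v => by
    have := congrArg (fun g : H →L[ℂ] H => g v) hQidem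
    simpa [ContinuousLinearMap.mul_apply] using this
  have hEfixed : ∀ v ∈ E, P n v = v := by
    have hle : E ≤ LinearMap.eqLocus ((P n : H →ₗ[ℂ] H)) LinearMap.id := by
      rw [hE]; apply Submodule.span_le.2
      rintro w ⟨i, rfl⟩
      refine LinearMap.mem_eqLocus.2 ?_
      rcases i with i | i <;> exact hPfix _
    exact fun v hv => hle hv
  have hPa' : P n a' = a' := by
    have h1 : P n z = z := hPfix _
    have h2 : P n (e z) = e z := hEfixed _ (he_mem z)
    rw [ha', map_sub, h1, h2]
  have ha'E : ∀ v ∈ E, (inner ℂ v a' : ℂ) = 0 :=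
    fun v hv => (Submodule.mem_orthogonal E a').1 (he_orth z) v hv
  have hFu : ∀ v ∈ F, (inner ℂ v (u - f u) : ℂ) = 0 :=
    fun v hv => (Submodule.mem_orthogonal F _).1 (hf_orth u) v hv
  have hinner : (inner ℂ a' (X b') : ℂ) = (‖a'‖ : ℂ) ^ 2 := by
    have h1 : (inner ℂ a' (X b') : ℂ) = inner ℂ a' z := by
      calc (inner ℂ a' (X b') : ℂ) = inner ℂ (P n a') (X b') := by rw [hPa']
        _ = inner ℂ a' (P n (X b')) := sa_inner hPsa _ _
        _ = inner ℂ a' z := rfl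
    have h2 : (inner ℂ a' (e z) : ℂ) = 0 :=
      inner_eq_zero_symm.2 (ha'E _ (he_mem z))
    have h3 : z = e z + a' := by rw [ha']; abel
    rw [h1, h3, inner_add_right, h2, zero_add, inner_self_eq_norm_sq_to_K]
    norm_num
  have hb'ne : b' ≠ 0 := by
    intro h
    have h0 : a' = 0 := by rw [ha', hz, h]; simp
    exact ha'ne h0
  have hb'pos : 0 < ‖b'‖ := norm_pos_iff.2 hb'ne
  have hfsa : IsSelfAdjoint f := isSelfAdjoint_starProjection F
  have hfidem : f * f = f := by
    ext v
    simpa [ContinuousLinearMap.mul_apply] using hf_fix _ (hf_mem v)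
  have h1f_sa : IsSelfAdjoint (1 - f) := (IsSelfAdjoint.one (R := H →L[ℂ] H)).sub hfsa
  have h1f_idem : (1 - f) * (1 - f) = 1 - f := by
    have hh : (1 - f) * (1 - f) = 1 - f - f + f * f := by noncomm_ring
    rw [hh, hfidem]; abel
  have hb'le : ‖b'‖ ≤ 1 := by
    have h1 : ‖b'‖ ≤ ‖u - f u‖ := proj_contract hQsa hQidem _
    have h2 : ‖u - f u‖ ≤ ‖u‖ := by
      have := proj_contract h1f_sa h1f_idem u
      simpa [ContinuousLinearMap.sub_apply, ContinuousLinearMap.one_apply] using this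
    linarith [hu1.le]
  have ha'nz : (‖a'‖ : ℝ) ≠ 0 := norm_ne_zero_iff.2 ha'ne
  have hb'nz : (‖b'‖ : ℝ) ≠ 0 := norm_ne_zero_iff.2 hb'ne
  refine ⟨((‖a'‖ : ℂ)⁻¹ • a', (‖b'‖ : ℂ)⁻¹ • b'), ?_, ?_, ?_, ?_, ?_, ?_, ?_, ?_, ?_⟩
  · simp only [norm_smul, norm_inv, Complex.norm_real, Real.norm_eq_abs,
      abs_of_nonneg (norm_nonneg a')]
    exact inv_mul_cancel₀ ha'nz
  · simp only [norm_smul, norm_inv, Complex.norm_real, Real.norm_eq_abs,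
      abs_of_nonneg (norm_nonneg b')]
    exact inv_mul_cancel₀ hb'nz
  · simp only [map_smul, hPa']
  · have : Q n b' = b' := hQfix _
    simp only [map_smul, this]
  · intro i hi
    have hmem : P n (x i) ∈ E := Submodule.subset_span ⟨Sum.inl ⟨i, hi⟩, rfl⟩
    have h0 : (inner ℂ (x i) a' : ℂ) = 0 := by
      calc (inner ℂ (x i) a' : ℂ) = inner ℂ (x i) (P n a') := by rw [hPa']
        _ = inner ℂ (P n (x i)) a' := (sa_inner hPsa _ _).symm
        _ = 0 := ha'E _ hmem
    simp [inner_smul_right, h0]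
  · intro i hi
    have hmem : Q n (y i) ∈ F := Submodule.subset_span ⟨Sum.inl ⟨i, hi⟩, rfl⟩
    have h0 : (inner ℂ (y i) b' : ℂ) = 0 := by
      calc (inner ℂ (y i) b' : ℂ) = inner ℂ (Q n (y i)) (u - f u) := (sa_inner hQsa _ _).symm
        _ = 0 := hFu _ hmem
    simp [inner_smul_right, h0]
  · intro i hi
    have hmem : Q n (ContinuousLinearMap.adjoint X (x i)) ∈ F :=
      Submodule.subset_span ⟨Sum.inr ⟨i, hi⟩, rfl⟩
    have h0 : (inner ℂ (x i) (X b') : ℂ) = 0 := by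
      calc (inner ℂ (x i) (X b') : ℂ)
          = inner ℂ (ContinuousLinearMap.adjoint X (x i)) b' :=
            (ContinuousLinearMap.adjoint_inner_left X b' (x i)).symm
        _ = inner ℂ (Q n (ContinuousLinearMap.adjoint X (x i))) (u - f u) :=
            (sa_inner hQsa _ _).symm
        _ = 0 := hFu _ hmem
    simp [map_smul, inner_smul_right, h0]
  · intro j hj
    have hmem : P n (X (y j)) ∈ E := Submodule.subset_span ⟨Sum.inr ⟨j, hj⟩, rfl⟩
    have h0 : (inner ℂ a' (X (y j)) : ℂ) = 0 := by
      calc (inner ℂ a' (X (y j)) : ℂ) = inner ℂ (P n a') (X (y j)) := by rw [hPa']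
        _ = inner ℂ a' (P n (X (y j))) := sa_inner hPsa _ _
        _ = 0 := inner_eq_zero_symm.2 (ha'E _ hmem)
    simp [inner_smul_left, h0]
  · have hval : (inner ℂ ((‖a'‖ : ℂ)⁻¹ • a') (X ((‖b'‖ : ℂ)⁻¹ • b')) : ℂ)
        = ((‖a'‖ / ‖b'‖ : ℝ) : ℂ) := by
      rw [map_smul, inner_smul_left, inner_smul_right, hinner, map_inv₀, Complex.conj_ofReal]
      have hca : (‖a'‖ : ℂ) ≠ 0 := by exact_mod_cast ha'nz
      have hcb : (‖b'‖ : ℂ) ≠ 0 := by exact_mod_cast hb'nz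
      push_cast
      field_simp
    rw [hval]
    constructor
    · simp
    · simp only [Complex.ofReal_re]
      rw [lt_div_iff₀ hb'pos]
      nlinarith

private noncomputable def buildSeq {α : Type*}
    (step : (n : ℕ) → ((i : ℕ) → i < n → α) → α) : ℕ → α
  | n => step n (fun i _ => buildSeq step i)
  termination_by n => n

/-- interpolating vectors: if `dist(P_n X Q_n, F_{4n-4}) > 1` for all
`n ≥ 1` (here the sequences are indexed from `0`, so the `n`-th term is the paper's
`(n+1)`-st and the rank bound is `4(n+1) - 4 = 4n`), then there are orthonormal
sequences `x_i ∈ P_i H`, `y_i ∈ Q_i H` with `⟪x_i, X y_j⟫ = 0` for `i ≠ j` and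
`⟪x_i, X y_i⟫` real and `> 1`. -/
theorem statement12 (X : H →L[ℂ] H) (P Q : ℕ → H →L[ℂ] H)
    (hP : ∀ n, IsSelfAdjoint (P n) ∧ P n * P n = P n)
    (hQ : ∀ n, IsSelfAdjoint (Q n) ∧ Q n * Q n = Q n)
    (hdist : ∀ n : ℕ, 1 < Metric.infDist (P n * X * Q n) (finRankLE H (4 * n))) :
    ∃ x y : ℕ → H, Orthonormal ℂ x ∧ Orthonormal ℂ y ∧
      (∀ i, P i (x i) = x i) ∧ (∀ i, Q i (y i) = y i) ∧
      (∀ i j, i ≠ j → (inner ℂ (x i) (X (y j)) : ℂ) = 0) ∧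
      (∀ i, (inner ℂ (x i) (X (y i)) : ℂ).im = 0 ∧ 1 < (inner ℂ (x i) (X (y i)) : ℂ).re) := by
  classical
  let step : (n : ℕ) → ((i : ℕ) → i < n → H × H) → H × H := fun n prev =>
    Classical.choose (key X P Q hP hQ hdist n
      (fun i => if h : i < n then (prev i h).1 else 0)
      (fun i => if h : i < n then (prev i h).2 else 0))
  let s : ℕ → H × H := buildSeq step
  have hs : ∀ n, s n = step n (fun i _ => s i) := fun n => by
    show buildSeq step n = _
    rw [buildSeq]
  set xx : ℕ → H := fun i => (s i).1 with hxx
  set yy : ℕ → H := fun i => (s i).2 with hyy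
  have spec : ∀ n, ‖xx n‖ = 1 ∧ ‖yy n‖ = 1 ∧ P n (xx n) = xx n ∧ Q n (yy n) = yy n ∧
      (∀ i < n, (inner ℂ (xx i) (xx n) : ℂ) = 0) ∧
      (∀ i < n, (inner ℂ (yy i) (yy n) : ℂ) = 0) ∧
      (∀ i < n, (inner ℂ (xx i) (X (yy n)) : ℂ) = 0) ∧
      (∀ j < n, (inner ℂ (xx n) (X (yy j)) : ℂ) = 0) ∧
      (inner ℂ (xx n) (X (yy n)) : ℂ).im = 0 ∧ 1 < (inner ℂ (xx n) (X (yy n)) : ℂ).re := by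
    intro n
    have hsn : s n = Classical.choose (key X P Q hP hQ hdist n
        (fun i => if h : i < n then (s i).1 else 0)
        (fun i => if h : i < n then (s i).2 else 0)) := hs n
    have hspec := Classical.choose_spec (key X P Q hP hQ hdist n
        (fun i => if h : i < n then (s i).1 else 0)
        (fun i => if h : i < n then (s i).2 else 0))
    rw [← hsn] at hspec
    obtain ⟨h1, h2, h3, h4, h5, h6, h7, h8, h9, h10⟩ := hspec
    refine ⟨h1, h2, h3, h4, ?_, ?_, ?_, ?_, h9, h10⟩
    · intro i hi; have := h5 i hi; simpa [dif_pos hi] using this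
    · intro i hi; have := h6 i hi; simpa [dif_pos hi] using this
    · intro i hi; have := h7 i hi; simpa [dif_pos hi] using this
    · intro j hj; have := h8 j hj; simpa [dif_pos hj] using this
  refine ⟨xx, yy, ?_, ?_, fun i => (spec i).2.2.1, fun i => (spec i).2.2.2.1, ?_, ?_⟩
  · rw [orthonormal_iff_ite]
    intro i j
    rcases eq_or_ne i j with rfl | hij
    · rw [if_pos rfl, inner_self_eq_norm_sq_to_K, (spec i).1]; norm_num
    · rw [if_neg hij]
      rcases lt_or_gt_of_ne hij with h | h
      · exact (spec j).2.2.2.2.1 i h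
      · exact inner_eq_zero_symm.2 ((spec i).2.2.2.2.1 j h)
  · rw [orthonormal_iff_ite]
    intro i j
    rcases eq_or_ne i j with rfl | hij
    · rw [if_pos rfl, inner_self_eq_norm_sq_to_K, (spec i).2.1]; norm_num
    · rw [if_neg hij]
      rcases lt_or_gt_of_ne hij with h | h
      · exact (spec j).2.2.2.2.2.1 i h
      · exact inner_eq_zero_symm.2 ((spec i).2.2.2.2.2.1 j h)
  · intro i j hij
    rcases lt_or_gt_of_ne hij with h | h
    · exact (spec j).2.2.2.2.2.2.1 i h
    · exact (spec i).2.2.2.2.2.2.2.1 j h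
  · intro i
    exact ⟨(spec i).2.2.2.2.2.2.2.2.1, (spec i).2.2.2.2.2.2.2.2.2⟩
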